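/- Let W be a BMS channel, let λ ≥ 0 be an integer, let N₁ be a positive integer, and let R ∈ [0,1] satisfy R·N₁·2^λ ∈ ℤ. Then E_λ(W,R,N₁) ≤ E_λ(W,R) (as extended reals). -/

import Mathlib

open scoped BigOperators

/-- A binary-input discrete channel: a finite output alphabet `Y` and a kernel
`W x y` = probability of output `y` given input `x`. -/
structure PreChannel where
  Y : Type
  [fin : Fintype Y]
  W : Bool → Y → ℝ

attribute [instance] PreChannel.fin

namespace PreChannel

/-- `W` is a valid binary memoryless symmetric (BMS) channel. -/
def IsBMS (W : PreChannel) : Prop :=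
  (∀ x y, 0 ≤ W.W x y) ∧ (∀ x, ∑ y, W.W x y = 1) ∧
    ∃ π : W.Y → W.Y, Function.Involutive π ∧ ∀ y, W.W false (π y) = W.W true y

/-- The polar "minus" transform `W⁻`. -/
noncomputable def minus (W : PreChannel) : PreChannel where
  Y := W.Y × W.Y
  fin := inferInstance
  W := fun u₁ p => ∑ u₂ : Bool, (1 / 2) * W.W (Bool.xor u₁ u₂) p.1 * W.W u₂ p.2

/-- The polar "plus" transform `W⁺`; output is `(y₁, y₂, u₁)`. -/
noncomputable def plus (W : PreChannel) : PreChannel where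
  Y := W.Y × W.Y × Bool
  fin := inferInstance
  W := fun u₂ p => (1 / 2) * W.W (Bool.xor p.2.2 u₂) p.1 * W.W u₂ p.2.1

/-- Capacity `I(W)` (in bits). -/
noncomputable def cap (W : PreChannel) : ℝ :=
  ∑ x : Bool, ∑ y, (1 / 2) * W.W x y *
    Real.logb 2 (W.W x y / ((1 / 2) * W.W false y + (1 / 2) * W.W true y))

/-- Dispersion `V(W)`. -/
noncomputable def disp (W : PreChannel) : ℝ :=
  (∑ x : Bool, ∑ y, (1 / 2) * W.W x y *
      (Real.logb 2 (W.W x y / ((1 / 2) * W.W false y + (1 / 2) * W.W true y))) ^ 2)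
    - cap W ^ 2

/-- Gallager's function `E₀(W, ρ)` (natural logarithm). -/
noncomputable def E0 (W : PreChannel) (ρ : ℝ) : ℝ :=
  - Real.log
      (∑ y, ((1 / 2) * (W.W false y ^ (1 / (1 + ρ)) + W.W true y ^ (1 / (1 + ρ)))) ^ (1 + ρ))

/-- Bhattacharyya parameter `Z(W)`. -/
noncomputable def Zb (W : PreChannel) : ℝ := ∑ y, Real.sqrt (W.W false y * W.W true y)

/-- `E_x(W, ρ) = −ρ ln[(1 + Z(W)^{1/ρ})/2]`. -/
noncomputable def Ex (W : PreChannel) (ρ : ℝ) : ℝ :=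
  - ρ * Real.log ((1 + Zb W ^ (1 / ρ)) / 2)

/-- Random-coding exponent `E_r(W, R)` as an extended real:
`max_{0 ≤ ρ ≤ 1} [E₀(W,ρ) − ρ R ln 2]` for `0 < R ≤ 1`, `+∞` at `R = 0`, `0` for `R > 1`. -/
noncomputable def Er (W : PreChannel) (R : ℝ) : EReal :=
  if R = 0 then ⊤
  else if 1 < R then 0
  else ((sSup {x : ℝ | ∃ ρ ∈ Set.Icc (0 : ℝ) 1, x = E0 W ρ - ρ * R * Real.log 2} : ℝ) : EReal)

/-- Expurgated exponent `E_ex(W, R) = sup_{ρ ≥ 1} [E_x(W,ρ) − ρ R ln 2]`. -/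
noncomputable def Eex (W : PreChannel) (R : ℝ) : EReal :=
  ⨆ ρ : {ρ : ℝ // 1 ≤ ρ}, ((Ex W ρ.1 - ρ.1 * R * Real.log 2 : ℝ) : EReal)

/-- `E(W, R) = max [E_r(W,R), E_ex(W,R)]` for `R ≤ 1`, and `0` for `R > 1`. -/
noncomputable def Echan (W : PreChannel) (R : ℝ) : EReal :=
  if 1 < R then 0 else max (Er W R) (Eex W R)

/-- `E(W, R, N₁) = max [E_r(W,R), E_ex(W, R + 2/N₁)]`. -/
noncomputable def EchanN (W : PreChannel) (R : ℝ) (N₁ : ℕ) : EReal :=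
  max (Er W R) (Eex W (R + 2 / (N₁ : ℝ)))

/-- Sub-channel `Wᵢ` after `lam` polarization steps: the most significant bit of `i`
is applied first, bit `1` = plus, bit `0` = minus. -/
noncomputable def subch : PreChannel → (lam : ℕ) → ℕ → PreChannel
  | W, 0, _ => W
  | W, l + 1, i => subch (if i / 2 ^ l % 2 = 1 then W.plus else W.minus) l (i % 2 ^ l)

/-- `W^s` for a sign sequence `s` (`true` = plus, `false` = minus), applied in order. -/
noncomputable def polarSeq : PreChannel → List Bool → PreChannel
  | W, [] => W
  | W, b :: rest => polarSeq (if b then W.plus else W.minus) rest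

/-- `exp(−t·E)` for `E ∈ [0, +∞]`, with the convention `exp(−∞) = 0`. -/
noncomputable def dexp (t : ℝ) (E : EReal) : ℝ :=
  if E = ⊤ then 0 else Real.exp (-t * E.toReal)

/-- `−ln s` with the convention `−ln 0 = +∞`. -/
noncomputable def nlog (s : ℝ) : EReal :=
  if s ≤ 0 then ⊤ else ((-Real.log s : ℝ) : EReal)

/-- The finite-blocklength exponent `E_λ(W, R, N₁)`:
`(1/(N₁ 2^λ)) · max over admissible rate tuples of −ln Σᵢ exp(−N₁ E(Wᵢ, Rᵢ, N₁))`. -/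
noncomputable def ElamN (W : PreChannel) (lam N₁ : ℕ) (R : ℝ) : EReal :=
  ((1 / ((N₁ : ℝ) * 2 ^ lam) : ℝ) : EReal) *
    sSup {v : EReal | ∃ Rv : Fin (2 ^ lam) → ℝ,
      (∀ i, Rv i ∈ Set.Icc (0 : ℝ) 1 ∧ ∃ k : ℤ, Rv i * (N₁ : ℝ) = (k : ℝ)) ∧
      (∑ i, Rv i) = 2 ^ lam * R ∧
      v = nlog (∑ i : Fin (2 ^ lam), dexp (N₁ : ℝ) (EchanN (subch W lam (i : ℕ)) (Rv i) N₁))}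

/-- The asymptotic exponent `E_λ(W, R)`, defined recursively;
`E_λ(W,R) = 0` for `R > 1` by convention. -/
noncomputable def ElamInf : PreChannel → ℕ → ℝ → EReal
  | W, 0, R => Echan W R
  | W, l + 1, R =>
      if 1 < R then 0
      else ((1 / 2 : ℝ) : EReal) *
        sSup {v : EReal | ∃ R₁ ∈ Set.Icc (max 0 (2 * R - 1)) (min 1 (2 * R)),
          v = min (ElamInf W.minus l R₁) (ElamInf W.plus l (2 * R - R₁))}

/-- `V_λ(W) = (Σᵢ √V(Wᵢ))² / 2^λ`. -/
noncomputable def Vlam (W : PreChannel) (lam : ℕ) : ℝ :=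
  (∑ i ∈ Finset.range (2 ^ lam), Real.sqrt (disp (subch W lam i))) ^ 2 / 2 ^ lam

end PreChannel

/-- Binary entropy function (base 2), with `h2 0 = h2 1 = 0`. -/
noncomputable def h2 (x : ℝ) : ℝ := -x * Real.logb 2 x - (1 - x) * Real.logb 2 (1 - x)

/-- Inverse of the binary entropy function, with values in `[0, 1/2]`. -/
noncomputable def h2inv (v : ℝ) : ℝ := Function.invFunOn h2 (Set.Icc 0 (1 / 2)) v

/-- `ε_h(x) = x − x²`. -/
noncomputable def epsh (x : ℝ) : ℝ := x - x ^ 2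

/-- `ε_l(x) = x − 1 + h₂(h₂⁻¹(1−x)·[2 − 2 h₂⁻¹(1−x)])`. -/
noncomputable def epsl (x : ℝ) : ℝ :=
  x - 1 + h2 (h2inv (1 - x) * (2 - 2 * h2inv (1 - x)))

/-- The binary symmetric channel with crossover probability `p`. -/
noncomputable def BSC (p : ℝ) : PreChannel where
  Y := Bool
  fin := inferInstance
  W := fun x y => if y = x then 1 - p else p

/-- The binary erasure channel with erasure probability `δ` (`none` = erasure). -/
noncomputable def BEC (δ : ℝ) : PreChannel where
  Y := Option Bool
  fin := inferInstance
  W := fun x y => match y with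
    | none => δ
    | some b => if b = x then 1 - δ else 0

/-- The channel-independent lower bound `Ê_λ(I, R)`. -/
noncomputable def Ehat : ℕ → ℝ → ℝ → EReal
  | 0, I, R => PreChannel.Echan (BSC (h2inv (1 - I))) R
  | l + 1, I, R =>
      ((1 / 2 : ℝ) : EReal) *
        sInf {w : EReal | ∃ ε ∈ Set.Icc (epsl I) (epsh I),
          w = sSup {v : EReal | ∃ R₁ ∈ Set.Icc (max 0 (2 * R - 1)) (min 1 (2 * R)),
            v = min (Ehat l (I - ε) R₁) (Ehat l (I + ε) (2 * R - R₁))}}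

/-- The Gaussian Q-function. -/
noncomputable def gaussQ (u : ℝ) : ℝ :=
  ∫ t in Set.Ioi u, (Real.sqrt (2 * Real.pi))⁻¹ * Real.exp (-t ^ 2 / 2)

open PreChannel


section Aux

open PreChannel Set

private lemma cmul_le_iff {c : ℝ} (hc : 0 < c) {x T : EReal} :
    (c : EReal) * x ≤ T ↔ x ≤ T / (c : EReal) := by
  rw [mul_comm]
  exact (EReal.le_div_iff_mul_le (by exact_mod_cast hc) (by simp)).symm

private lemma cmul_mono {c : ℝ} (hc : 0 < c) {x y : EReal} (h : x ≤ y) :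
    (c : EReal) * x ≤ (c : EReal) * y :=
  (cmul_le_iff hc).2 (h.trans ((cmul_le_iff hc).1 le_rfl))

private lemma cmul_sSup_le {c : ℝ} (hc : 0 < c) {S : Set EReal} {T : EReal}
    (h : ∀ v ∈ S, (c : EReal) * v ≤ T) : (c : EReal) * sSup S ≤ T :=
  (cmul_le_iff hc).2 (sSup_le fun v hv => (cmul_le_iff hc).1 (h v hv))

private lemma dexp_nonneg (t : ℝ) (E : EReal) : 0 ≤ dexp t E := by
  unfold dexp
  split_ifs
  · exact le_rfl
  · exact (Real.exp_pos _).le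

private lemma nlog_anti {s t : ℝ} (h : s ≤ t) : nlog t ≤ nlog s := by
  unfold nlog
  split_ifs with h1 h2 h2
  · exact le_rfl
  · exact absurd (h.trans h1) h2
  · exact le_top
  · exact EReal.coe_le_coe_iff.2 (neg_le_neg (Real.log_le_log (not_le.1 h2) h))

private lemma nlog_dexp {t : ℝ} (ht : 0 < t) {E : EReal} (hE : E ≠ ⊥) :
    nlog (dexp t E) = (t : EReal) * E := by
  unfold nlog dexp
  by_cases hT : E = ⊤
  · rw [if_pos hT, if_pos le_rfl, hT, EReal.mul_top_of_pos (by exact_mod_cast ht)]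
  · rw [if_neg hT, if_neg (not_le.2 (Real.exp_pos _)), Real.log_exp]
    conv_rhs => rw [← EReal.coe_toReal hT hE]
    rw [← EReal.coe_mul, EReal.coe_eq_coe_iff]
    ring

private lemma Er_ne_bot (W : PreChannel) (R : ℝ) : Er W R ≠ ⊥ := by
  unfold Er
  split_ifs <;> simp

private lemma EchanN_ne_bot (W : PreChannel) (R : ℝ) (N₁ : ℕ) : EchanN W R N₁ ≠ ⊥ := by
  intro h
  exact Er_ne_bot W R (le_bot_iff.1 (h ▸ le_max_left (Er W R) (Eex W (R + 2 / (N₁ : ℝ)))))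

private lemma Eex_anti (W : PreChannel) {R R' : ℝ} (h : R ≤ R') : Eex W R' ≤ Eex W R := by
  unfold Eex
  refine iSup_mono fun ρ => EReal.coe_le_coe_iff.2 ?_
  have hρ : (0 : ℝ) ≤ ρ.1 := le_trans zero_le_one ρ.2
  have hl : (0 : ℝ) ≤ Real.log 2 := Real.log_nonneg one_le_two
  have := mul_le_mul_of_nonneg_right (mul_le_mul_of_nonneg_left h hρ) hl
  linarith

private lemma EchanN_le_Echan (W : PreChannel) {R : ℝ} (hR : R ≤ 1) (N₁ : ℕ) :
    EchanN W R N₁ ≤ Echan W R := by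
  unfold EchanN Echan
  rw [if_neg (not_lt.2 hR)]
  exact max_le_max le_rfl (Eex_anti W (le_add_of_nonneg_right (by positivity)))

private def finL (l : ℕ) (j : Fin (2 ^ l)) : Fin (2 ^ (l + 1)) :=
  ⟨j.1, by have := j.2; rw [pow_succ]; omega⟩

private def finR (l : ℕ) (j : Fin (2 ^ l)) : Fin (2 ^ (l + 1)) :=
  ⟨2 ^ l + j.1, by have := j.2; rw [pow_succ]; omega⟩

private lemma sum_split {M : Type*} [AddCommMonoid M] {l : ℕ} (f : Fin (2 ^ (l + 1)) → M) :
    ∑ i, f i = (∑ j : Fin (2 ^ l), f (finL l j)) + ∑ j : Fin (2 ^ l), f (finR l j) := by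
  have e : 2 ^ l + 2 ^ l = 2 ^ (l + 1) := by rw [pow_succ]; omega
  rw [← Fin.sum_congr' f e, Fin.sum_univ_add]
  congr 1 <;> refine Finset.sum_congr rfl fun j _ => ?_ <;> congr 1 <;>
    exact Fin.ext (by simp [finL, finR])

private lemma subch_succ_lo (W : PreChannel) (l j : ℕ) (hj : j < 2 ^ l) :
    subch W (l + 1) j = subch W.minus l j := by
  have h1 : j / 2 ^ l = 0 := Nat.div_eq_of_lt hj
  simp [subch, h1, Nat.mod_eq_of_lt hj]

private lemma subch_succ_hi (W : PreChannel) (l j : ℕ) (hj : j < 2 ^ l) :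
    subch W (l + 1) (2 ^ l + j) = subch W.plus l j := by
  have h1 : (2 ^ l + j) / 2 ^ l = 1 := by
    rw [Nat.add_comm, Nat.add_div_right _ (by positivity),
      Nat.div_eq_of_lt hj]
  have h2 : (2 ^ l + j) % 2 ^ l = j := by
    rw [Nat.add_mod_left, Nat.mod_eq_of_lt hj]
  simp [subch, h1, h2]

private lemma main_le : ∀ (lam : ℕ) (W : PreChannel) (N₁ : ℕ), 1 ≤ N₁ → ∀ R : ℝ,
    ElamN W lam N₁ R ≤ ElamInf W lam R := by
  intro lam
  induction lam with
  | zero =>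
    intro W N₁ hN R
    have hN0 : (0 : ℝ) < N₁ := by exact_mod_cast hN
    have hc : (0 : ℝ) < 1 / ((N₁ : ℝ) * 2 ^ (0 : ℕ)) := by positivity
    unfold ElamN
    refine cmul_sSup_le hc ?_
    rintro v ⟨Rv, hprop, hsum, rfl⟩
    set i0 : Fin (2 ^ 0) := ⟨0, by norm_num⟩ with hi0
    have huniv : (Finset.univ : Finset (Fin (2 ^ 0))) = {i0} := by
      refine Finset.eq_singleton_iff_unique_mem.2 ⟨Finset.mem_univ _, fun x _ => ?_⟩
      exact Fin.ext (by have := x.2; omega)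
    rw [huniv, Finset.sum_singleton] at hsum ⊢
    have hRv0 : Rv i0 = R := by norm_num at hsum; linarith
    have hsub : subch W 0 (i0 : ℕ) = W := rfl
    rw [hsub, hRv0, nlog_dexp hN0 (EchanN_ne_bot W R N₁), ← mul_assoc, ← EReal.coe_mul]
    have hco : 1 / ((N₁ : ℝ) * 2 ^ (0 : ℕ)) * (N₁ : ℝ) = 1 := by
      field_simp
    rw [hco, EReal.coe_one, one_mul]
    have hR1 : R ≤ 1 := by
      have := (hprop i0).1.2; rw [hRv0] at this; exact this
    exact (EchanN_le_Echan W hR1 N₁).trans_eq (by simp [ElamInf])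
  | succ l ih =>
    intro W N₁ hN R
    have hN0 : (0 : ℝ) < N₁ := by exact_mod_cast hN
    have h2l : (0 : ℝ) < 2 ^ l := by positivity
    have hc : (0 : ℝ) < 1 / ((N₁ : ℝ) * 2 ^ (l + 1)) := by positivity
    have hcl : (0 : ℝ) < 1 / ((N₁ : ℝ) * 2 ^ l) := by positivity
    unfold ElamN
    refine cmul_sSup_le hc ?_
    rintro v ⟨Rv, hprop, hsum, rfl⟩
    set RL : Fin (2 ^ l) → ℝ := fun j => Rv (finL l j) with hRLdef
    set RR : Fin (2 ^ l) → ℝ := fun j => Rv (finR l j) with hRRdef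
    set R1 : ℝ := (∑ j, RL j) / 2 ^ l with hR1def
    set R2 : ℝ := (∑ j, RR j) / 2 ^ l with hR2def
    have hsplitR : (∑ j, RL j) + ∑ j, RR j = 2 ^ (l + 1) * R := by
      rw [← sum_split]; exact hsum
    have hsumL : ∑ j, RL j = 2 ^ l * R1 := by rw [hR1def]; field_simp
    have hsumR : ∑ j, RR j = 2 ^ l * R2 := by rw [hR2def]; field_simp
    have hR12 : R1 + R2 = 2 * R := by
      have h2s : (2 : ℝ) ^ (l + 1) = 2 ^ l * 2 := by rw [pow_succ]
      rw [hsumL, hsumR, h2s] at hsplitR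
      have : (2 : ℝ) ^ l * (R1 + R2) = 2 ^ l * (2 * R) := by ring_nf; ring_nf at hsplitR; linarith
      exact mul_left_cancel₀ (ne_of_gt h2l) this
    have hub : ∀ (g : Fin (2 ^ l) → ℝ), (∀ j, g j ∈ Icc (0 : ℝ) 1) →
        (∑ j, g j) / 2 ^ l ∈ Icc (0 : ℝ) 1 := by
      intro g hg
      constructor
      · exact div_nonneg (Finset.sum_nonneg fun j _ => (hg j).1) h2l.le
      · rw [div_le_one h2l]
        calc ∑ j, g j ≤ ∑ _j : Fin (2 ^ l), (1 : ℝ) :=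
              Finset.sum_le_sum fun j _ => (hg j).2
          _ = 2 ^ l := by simp
    have hR1mem : R1 ∈ Icc (0 : ℝ) 1 := hub RL fun j => (hprop _).1
    have hR2mem : R2 ∈ Icc (0 : ℝ) 1 := hub RR fun j => (hprop _).1
    have hR01 : R ≤ 1 := by
      have := hR1mem.2; have := hR2mem.2; linarith
    have hR2eq : 2 * R - R1 = R2 := by linarith
    -- the full sum and its halves
    set fsum : Fin (2 ^ (l + 1)) → ℝ :=
      fun i => dexp (N₁ : ℝ) (EchanN (subch W (l + 1) (i : ℕ)) (Rv i) N₁) with hfs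
    have hSsplit : ∑ i, fsum i = (∑ j, fsum (finL l j)) + ∑ j, fsum (finR l j) := sum_split _
    have hfL : ∀ j : Fin (2 ^ l),
        fsum (finL l j) = dexp (N₁ : ℝ) (EchanN (subch W.minus l (j : ℕ)) (RL j) N₁) := by
      intro j
      simp only [hfs, hRLdef]
      rw [show ((finL l j : Fin (2 ^ (l + 1))) : ℕ) = (j : ℕ) from rfl,
        subch_succ_lo W l j.1 j.2]
    have hfR : ∀ j : Fin (2 ^ l),
        fsum (finR l j) = dexp (N₁ : ℝ) (EchanN (subch W.plus l (j : ℕ)) (RR j) N₁) := by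
      intro j
      simp only [hfs, hRRdef]
      rw [show ((finR l j : Fin (2 ^ (l + 1))) : ℕ) = 2 ^ l + (j : ℕ) from rfl,
        subch_succ_hi W l j.1 j.2]
    have hnnL : 0 ≤ ∑ j, fsum (finL l j) := Finset.sum_nonneg fun j _ => dexp_nonneg _ _
    have hnnR : 0 ≤ ∑ j, fsum (finR l j) := Finset.sum_nonneg fun j _ => dexp_nonneg _ _
    -- minus side
    have hminus : ((1 / ((N₁ : ℝ) * 2 ^ l) : ℝ) : EReal) * nlog (∑ i, fsum i) ≤
        ElamInf W.minus l R1 := by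
      have h1 : nlog (∑ i, fsum i) ≤
          nlog (∑ j : Fin (2 ^ l), dexp (N₁ : ℝ)
            (EchanN (subch W.minus l (j : ℕ)) (RL j) N₁)) := by
        rw [← Finset.sum_congr rfl fun j _ => hfL j]
        exact nlog_anti (by rw [hSsplit]; linarith)
      have hmem : nlog (∑ j : Fin (2 ^ l), dexp (N₁ : ℝ)
            (EchanN (subch W.minus l (j : ℕ)) (RL j) N₁)) ∈
          {v : EReal | ∃ Rv : Fin (2 ^ l) → ℝ,
            (∀ i, Rv i ∈ Set.Icc (0 : ℝ) 1 ∧ ∃ k : ℤ, Rv i * (N₁ : ℝ) = (k : ℝ)) ∧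
            (∑ i, Rv i) = 2 ^ l * R1 ∧
            v = nlog (∑ i : Fin (2 ^ l),
              dexp (N₁ : ℝ) (EchanN (subch W.minus l (i : ℕ)) (Rv i) N₁))} :=
        ⟨RL, fun j => hprop _, hsumL, rfl⟩
      have hElamN := ih W.minus N₁ hN R1
      unfold ElamN at hElamN
      exact le_trans (cmul_mono hcl (h1.trans (le_sSup hmem))) hElamN
    -- plus side
    have hplus : ((1 / ((N₁ : ℝ) * 2 ^ l) : ℝ) : EReal) * nlog (∑ i, fsum i) ≤
        ElamInf W.plus l R2 := by
      have h1 : nlog (∑ i, fsum i) ≤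
          nlog (∑ j : Fin (2 ^ l), dexp (N₁ : ℝ)
            (EchanN (subch W.plus l (j : ℕ)) (RR j) N₁)) := by
        rw [← Finset.sum_congr rfl fun j _ => hfR j]
        exact nlog_anti (by rw [hSsplit]; linarith)
      have hmem : nlog (∑ j : Fin (2 ^ l), dexp (N₁ : ℝ)
            (EchanN (subch W.plus l (j : ℕ)) (RR j) N₁)) ∈
          {v : EReal | ∃ Rv : Fin (2 ^ l) → ℝ,
            (∀ i, Rv i ∈ Set.Icc (0 : ℝ) 1 ∧ ∃ k : ℤ, Rv i * (N₁ : ℝ) = (k : ℝ)) ∧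
            (∑ i, Rv i) = 2 ^ l * R2 ∧
            v = nlog (∑ i : Fin (2 ^ l),
              dexp (N₁ : ℝ) (EchanN (subch W.plus l (i : ℕ)) (Rv i) N₁))} :=
        ⟨RR, fun j => hprop _, hsumR, rfl⟩
      have hElamN := ih W.plus N₁ hN R2
      unfold ElamN at hElamN
      exact le_trans (cmul_mono hcl (h1.trans (le_sSup hmem))) hElamN
    -- combine
    have hBmem : min (ElamInf W.minus l R1) (ElamInf W.plus l (2 * R - R1)) ∈
        {v : EReal | ∃ R₁ ∈ Set.Icc (max 0 (2 * R - 1)) (min 1 (2 * R)),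
          v = min (ElamInf W.minus l R₁) (ElamInf W.plus l (2 * R - R₁))} := by
      refine ⟨R1, ⟨max_le hR1mem.1 (by linarith [hR2mem.2]),
        le_min hR1mem.2 (by linarith [hR2mem.1])⟩, rfl⟩
    have hElamInf : ElamInf W (l + 1) R = ((1 / 2 : ℝ) : EReal) *
        sSup {v : EReal | ∃ R₁ ∈ Set.Icc (max 0 (2 * R - 1)) (min 1 (2 * R)),
          v = min (ElamInf W.minus l R₁) (ElamInf W.plus l (2 * R - R₁))} := by
      simp only [ElamInf]
      rw [if_neg (not_lt.2 hR01)]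
    rw [hElamInf]
    have hcoef : ((1 / ((N₁ : ℝ) * 2 ^ (l + 1)) : ℝ) : EReal) =
        ((1 / 2 : ℝ) : EReal) * ((1 / ((N₁ : ℝ) * 2 ^ l) : ℝ) : EReal) := by
      rw [← EReal.coe_mul, EReal.coe_eq_coe_iff, pow_succ]
      field_simp
    rw [hcoef, mul_assoc]
    refine cmul_mono (by norm_num : (0:ℝ) < 1/2) ?_
    refine le_trans (le_min hminus ?_) (le_sSup hBmem)
    rw [hR2eq]
    exact hplus

end Aux

/-- `E_λ(W, R, N₁) ≤ E_λ(W, R)`. -/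
theorem stmt1 (W : PreChannel) (hW : W.IsBMS) (lam N₁ : ℕ) (hN₁ : 1 ≤ N₁)
    (R : ℝ) (hR : R ∈ Set.Icc (0 : ℝ) 1)
    (hInt : ∃ k : ℤ, R * (N₁ : ℝ) * 2 ^ lam = (k : ℝ)) :
    ElamN W lam N₁ R ≤ ElamInf W lam R :=
  main_le lam W N₁ hN₁ R
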